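/- A locally Lipschitz map H : D → ℝⁿ on an open set D ⊆ ℝⁿ is Fréchet differentiable at x ∈ D if and only if the tangent cone to the graph of H at (x, H(x)) is an n-dimensional linear subspace of ℝⁿ × ℝⁿ; in that case this tangent cone equals {(p, ∇H(x)p) : p ∈ ℝⁿ}. -/

import Mathlib

open Filter Topology Metric Set
open scoped NNReal

noncomputable section

def tangentConeSeq {F : Type*} [NormedAddCommGroup F] [NormedSpace ℝ F]
    (Ω : Set F) (xb : F) : Set F :=
  {v | ∃ (t : ℕ → ℝ) (w : ℕ → F), (∀ k, 0 < t k) ∧ Tendsto t atTop (𝓝 0) ∧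
      Tendsto w atTop (𝓝 v) ∧ ∀ k, xb + t k • w k ∈ Ω}

section Aux

variable {E : Type*} [NormedAddCommGroup E] [NormedSpace ℝ E]
variable {D : Set E} {H : E → E} {x : E}

theorem cone_sub_deriv {A : E →L[ℝ] E} (hd : HasFDerivAt H A x) {v : E × E}
    (hv : v ∈ tangentConeSeq {p : E × E | p.1 ∈ D ∧ p.2 = H p.1} (x, H x)) :
    v.2 = A v.1 := by
  obtain ⟨t, w, ht0, htlim, hwlim, hmem⟩ := hv
  have hne : ∀ k, t k ≠ 0 := fun k => (ht0 k).ne'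
  have hmem2 : ∀ k, H x + t k • (w k).2 = H (x + t k • (w k).1) := by
    intro k
    have := (hmem k).2
    simp only [Prod.fst_add, Prod.snd_add, Prod.smul_fst, Prod.smul_snd] at this
    exact this
  set h : ℕ → E := fun k => t k • (w k).1 with hh
  have hw1 : Tendsto (fun k => (w k).1) atTop (𝓝 v.1) := (continuous_fst.tendsto v).comp hwlim
  have hw2 : Tendsto (fun k => (w k).2) atTop (𝓝 v.2) := (continuous_snd.tendsto v).comp hwlim
  have hh0 : Tendsto h atTop (𝓝 0) := by
    have := htlim.smul hw1
    simpa using this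
  have hkey : ∀ k, (w k).2 - A ((w k).1) = (t k)⁻¹ • (H (x + h k) - H x - A (h k)) := by
    intro k
    have h2 : (t k)⁻¹ • (H (x + h k) - H x) = (w k).2 := by
      rw [← hmem2 k]
      simp [inv_smul_smul₀ (hne k)]
    have h3 : (t k)⁻¹ • (A (h k)) = A ((w k).1) := by
      rw [← A.map_smul, hh]
      simp [inv_smul_smul₀ (hne k)]
    rw [smul_sub, h2, h3]
  have hdiff : Tendsto (fun k => (w k).2 - A ((w k).1)) atTop (𝓝 0) := by
    rw [NormedAddCommGroup.tendsto_nhds_zero]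
    intro ε hε
    set M := ‖v.1‖ + 1 with hM
    have hM0 : 0 < M := by positivity
    set c := ε / (2 * M) with hc
    have hc0 : 0 < c := by positivity
    have hlo := hasFDerivAt_iff_isLittleO_nhds_zero.mp hd
    have hev1 : ∀ᶠ k in atTop, ‖H (x + h k) - H x - A (h k)‖ ≤ c * ‖h k‖ :=
      hh0.eventually (Asymptotics.IsLittleO.def hlo hc0)
    have hev2 : ∀ᶠ k in atTop, ‖(w k).1‖ < M := by
      have := hw1.norm
      exact this.eventually_lt_const (by simp [hM])
    filter_upwards [hev1, hev2] with k h1 h2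
    rw [hkey k, norm_smul, norm_inv, Real.norm_eq_abs, abs_of_pos (ht0 k)]
    have hhn : ‖h k‖ = t k * ‖(w k).1‖ := by
      rw [hh]
      simp [norm_smul, abs_of_pos (ht0 k)]
    have hle : (t k)⁻¹ * ‖H (x + h k) - H x - A (h k)‖ ≤ (t k)⁻¹ * (c * (t k * ‖(w k).1‖)) := by
      apply mul_le_mul_of_nonneg_left _ (inv_nonneg.mpr (ht0 k).le)
      rw [← hhn]; exact h1
    refine lt_of_le_of_lt hle ?_
    have ht0k := ht0 k
    have : (t k)⁻¹ * (c * (t k * ‖(w k).1‖)) = c * ‖(w k).1‖ := by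
      field_simp
    rw [this]
    calc c * ‖(w k).1‖ ≤ c * M := by nlinarith [h2, hc0]
    _ = ε / 2 := by rw [hc]; field_simp
    _ < ε := by linarith
  have := tendsto_nhds_unique (hw2.sub ((A.continuous.tendsto v.1).comp hw1)) hdiff
  exact sub_eq_zero.mp this


theorem graph_mem_cone {A : E →L[ℝ] E} (hD : IsOpen D) (hx : x ∈ D)
    (hd : HasFDerivAt H A x) (p : E) :
    (p, A p) ∈ tangentConeSeq {q : E × E | q.1 ∈ D ∧ q.2 = H q.1} (x, H x) := by
  obtain ⟨δ, hδ0, hball⟩ := Metric.isOpen_iff.mp hD x hx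
  set t : ℕ → ℝ := fun k => δ / (((k : ℝ) + 1) * (‖p‖ + 1)) with ht
  have ht0 : ∀ k, 0 < t k := by
    intro k
    have : (0:ℝ) < ‖p‖ + 1 := by positivity
    positivity
  have hne : ∀ k, t k ≠ 0 := fun k => (ht0 k).ne'
  have htlim : Tendsto t atTop (𝓝 0) := by
    have h1 : Tendsto (fun k : ℕ => (1 : ℝ) / ((k : ℝ) + 1)) atTop (𝓝 0) :=
      tendsto_one_div_add_atTop_nhds_zero_nat
    have := h1.const_mul (δ / (‖p‖ + 1))
    rw [mul_zero] at this
    refine this.congr fun k => ?_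
    rw [ht]
    have : (0:ℝ) < ‖p‖ + 1 := by positivity
    field_simp
  have hmemD : ∀ k, x + t k • p ∈ D := by
    intro k
    apply hball
    rw [Metric.mem_ball, dist_self_add_left]
    rw [norm_smul, Real.norm_eq_abs, abs_of_pos (ht0 k), ht]
    have hp : (0:ℝ) < ‖p‖ + 1 := by positivity
    have hk : (0:ℝ) < (k : ℝ) + 1 := by positivity
    rw [div_mul_eq_mul_div, div_lt_iff₀ (by positivity)]
    have h1 : ‖p‖ < (‖p‖ + 1) := by linarith
    have h2 : (1:ℝ) ≤ (k:ℝ) + 1 := by linarith [Nat.cast_nonneg (α := ℝ) k]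
    have h3 : ‖p‖ + 1 ≤ ((k:ℝ) + 1) * (‖p‖ + 1) := by nlinarith
    nlinarith [mul_lt_mul_of_pos_left (lt_of_lt_of_le h1 h3) hδ0]
  refine ⟨t, fun k => (p, (t k)⁻¹ • (H (x + t k • p) - H x)), ht0, htlim, ?_, ?_⟩
  · refine Tendsto.prodMk_nhds tendsto_const_nhds ?_
    have hc : Tendsto (fun k => ‖(t k)⁻¹‖) atTop atTop := by
      have h1 : Tendsto (fun k : ℕ => ((k : ℝ) + 1) * ((‖p‖ + 1) / δ)) atTop atTop := by
        apply Tendsto.atTop_mul_const (by positivity)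
        exact tendsto_atTop_add_const_right _ _ tendsto_natCast_atTop_atTop
      refine h1.congr fun k => ?_
      rw [Real.norm_eq_abs, abs_of_pos (inv_pos.mpr (ht0 k)), ht]
      have hp : (0:ℝ) < ‖p‖ + 1 := by positivity
      have hk : (0:ℝ) < (k : ℝ) + 1 := by positivity
      field_simp
    have := hd.lim p hc
    refine this.congr fun k => ?_
    rw [inv_inv]
  · intro k
    refine ⟨by simpa using hmemD k, ?_⟩
    show ((x, H x) + t k • (p, (t k)⁻¹ • (H (x + t k • p) - H x))).2
        = H ((x, H x) + t k • (p, (t k)⁻¹ • (H (x + t k • p) - H x))).1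
    simp only [Prod.fst_add, Prod.snd_add, Prod.smul_fst, Prod.smul_snd]
    rw [smul_inv_smul₀ (hne k)]
    abel

theorem cone_norm_bound {K : ℝ≥0} {δ : ℝ} (hδ0 : 0 < δ)
    (hlipb : LipschitzOnWith K H (Metric.ball x δ)) {v : E × E}
    (hv : v ∈ tangentConeSeq {p : E × E | p.1 ∈ D ∧ p.2 = H p.1} (x, H x)) :
    ‖v.2‖ ≤ K * ‖v.1‖ := by
  obtain ⟨t, w, ht0, htlim, hwlim, hmem⟩ := hv
  have hmem2 : ∀ k, H x + t k • (w k).2 = H (x + t k • (w k).1) := by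
    intro k
    have := (hmem k).2
    simp only [Prod.fst_add, Prod.snd_add, Prod.smul_fst, Prod.smul_snd] at this
    exact this
  have hw1 : Tendsto (fun k => (w k).1) atTop (𝓝 v.1) := (continuous_fst.tendsto v).comp hwlim
  have hw2 : Tendsto (fun k => (w k).2) atTop (𝓝 v.2) := (continuous_snd.tendsto v).comp hwlim
  have hh0 : Tendsto (fun k => t k • (w k).1) atTop (𝓝 0) := by
    have := htlim.smul hw1; simpa using this
  have hev : ∀ᶠ k in atTop, ‖(w k).2‖ ≤ (K : ℝ) * ‖(w k).1‖ := by
    have hball : ∀ᶠ k in atTop, x + t k • (w k).1 ∈ Metric.ball x δ := by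
      have := hh0.eventually (Metric.ball_mem_nhds (0 : E) hδ0)
      filter_upwards [this] with k hk
      rw [Metric.mem_ball, dist_self_add_left]
      simpa using hk
    filter_upwards [hball] with k hk
    have hd := hlipb.dist_le_mul _ hk _ (Metric.mem_ball_self hδ0)
    rw [dist_eq_norm, dist_eq_norm] at hd
    have e1 : H (x + t k • (w k).1) - H x = t k • (w k).2 := by
      rw [← hmem2 k]; abel
    rw [e1] at hd
    have e2 : x + t k • (w k).1 - x = t k • (w k).1 := by abel
    rw [e2] at hd
    rw [norm_smul, norm_smul, Real.norm_eq_abs, abs_of_pos (ht0 k)] at hd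
    have := (mul_le_mul_iff_right₀ (ht0 k)).mp (by linarith [hd] : t k * ‖(w k).2‖ ≤ t k * ((K:ℝ) * ‖(w k).1‖))
    exact this
  exact le_of_tendsto_of_tendsto hw2.norm ((hw1.norm).const_mul (K:ℝ)) hev

end Aux

theorem graph_eq_range {R M M₂ : Type*} [Ring R] [AddCommGroup M] [AddCommGroup M₂]
    [Module R M] [Module R M₂] (f : M →ₗ[R] M₂) :
    f.graph = LinearMap.range (LinearMap.prod LinearMap.id f) := by
  ext v
  rw [LinearMap.mem_graph_iff, LinearMap.mem_range]
  constructor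
  · intro h
    exact ⟨v.1, by rw [LinearMap.prod_apply]; exact Prod.ext rfl h.symm⟩
  · rintro ⟨m, rfl⟩
    rfl

theorem converse_aux {E : Type*} [NormedAddCommGroup E] [NormedSpace ℝ E]
    [FiniteDimensional ℝ E] {D : Set E} (hD : IsOpen D) {H : E → E} {x : E} (hx : x ∈ D)
    {K : ℝ≥0} {s : Set E} (hs : s ∈ 𝓝 x) (hlipK : LipschitzOnWith K H s)
    (L : Submodule ℝ (E × E)) (hfr : Module.finrank ℝ L = Module.finrank ℝ E)
    (hcone : tangentConeSeq {p : E × E | p.1 ∈ D ∧ p.2 = H p.1} (x, H x) = (L : Set (E × E))) :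
    DifferentiableAt ℝ H x := by
  obtain ⟨δ, hδ0, hball⟩ := Metric.mem_nhds_iff.mp (Filter.inter_mem hs (hD.mem_nhds hx))
  have hballD : Metric.ball x δ ⊆ D := fun y hy => (hball hy).2
  have hlipb : LipschitzOnWith K H (Metric.ball x δ) := hlipK.mono (fun y hy => (hball hy).1)
  have hker : ∀ v : E × E, v ∈ L → v.1 = 0 → v.2 = 0 := by
    intro v hvL hv1
    have hvc : v ∈ tangentConeSeq {p : E × E | p.1 ∈ D ∧ p.2 = H p.1} (x, H x) := by
      rw [hcone]; exact hvL
    have hb := cone_norm_bound hδ0 hlipb hvc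
    rw [hv1] at hb
    simp only [norm_zero, mul_zero] at hb
    exact norm_le_zero_iff.mp hb
  set f : L →ₗ[ℝ] E := (LinearMap.fst ℝ E E).comp L.subtype with hf
  have hinj : Function.Injective f := by
    rw [← LinearMap.ker_eq_bot, LinearMap.ker_eq_bot']
    rintro ⟨v, hv⟩ hfv
    have hv1 : v.1 = 0 := hfv
    have hv2 : v.2 = 0 := hker v hv hv1
    exact Subtype.ext (Prod.ext hv1 hv2)
  set e := f.linearEquivOfInjective hinj hfr with he
  have heapp : ∀ u : L, e u = (u : E × E).1 := fun u =>
    LinearMap.linearEquivOfInjective_apply hinj hfr u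
  set A : E →ₗ[ℝ] E := (LinearMap.snd ℝ E E).comp (L.subtype.comp e.symm.toLinearMap) with hA
  have hAapp : ∀ p : E, A p = ((e.symm p : L) : E × E).2 := fun p => rfl
  have hgraph : ∀ v : E × E, v ∈ L ↔ v.2 = A v.1 := by
    intro v
    constructor
    · intro hv
      have h2 : e.symm v.1 = ⟨v, hv⟩ := by
        rw [← heapp ⟨v, hv⟩, LinearEquiv.symm_apply_apply]
      rw [hAapp, h2]
    · intro hv
      have h1 : ((e.symm v.1 : L) : E × E).1 = v.1 := by
        rw [← heapp (e.symm v.1), e.apply_symm_apply]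
      have : ((e.symm v.1 : L) : E × E) = v := Prod.ext h1 (by rw [← hAapp, hv])
      rw [← this]
      exact (e.symm v.1).2
  set A' : E →L[ℝ] E := LinearMap.toContinuousLinearMap A with hA'
  have hA'app : ∀ p : E, A' p = A p := fun p => rfl
  suffices hfd : HasFDerivAt H A' x from hfd.differentiableAt
  rw [hasFDerivAt_iff_isLittleO_nhds_zero, Asymptotics.isLittleO_iff]
  by_contra hcon
  push_neg at hcon
  obtain ⟨ε, hε, hfreq⟩ := hcon
  have hseq : ∀ k : ℕ, ∃ h : E,
      ‖h‖ < δ / ((k : ℝ) + 1) ∧ ε * ‖h‖ < ‖H (x + h) - H x - A' h‖ := by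
    intro k
    have hballn : Metric.ball (0 : E) (δ / ((k : ℝ) + 1)) ∈ 𝓝 (0 : E) :=
      Metric.ball_mem_nhds _ (by positivity)
    obtain ⟨h, hh1, hh2⟩ := (hfreq.and_eventually (eventually_mem_set.mpr hballn)).exists
    refine ⟨h, by simpa [Metric.mem_ball, dist_zero_right] using hh2, ?_⟩
    exact hh1
  choose hs' hnorm hgt using hseq
  have hne0 : ∀ k, hs' k ≠ 0 := by
    intro k h0
    have := hgt k
    rw [h0] at this
    simp at this
  set tt : ℕ → ℝ := fun k => ‖hs' k‖ with htt
  have htt0 : ∀ k, 0 < tt k := fun k => norm_pos_iff.mpr (hne0 k)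
  have httlim : Tendsto tt atTop (𝓝 0) := by
    have h1 : Tendsto (fun k : ℕ => δ / ((k : ℝ) + 1)) atTop (𝓝 0) := by
      have := tendsto_one_div_add_atTop_nhds_zero_nat.const_mul δ
      rw [mul_zero] at this
      refine this.congr fun k => ?_
      field_simp
    exact squeeze_zero (fun k => (htt0 k).le) (fun k => (hnorm k).le) h1
  set u : ℕ → E := fun k => (tt k)⁻¹ • hs' k with hu
  set q : ℕ → E := fun k => (tt k)⁻¹ • (H (x + hs' k) - H x) with hq
  have hun : ∀ k, ‖u k‖ = 1 := by
    intro k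
    rw [hu]
    simp only [norm_smul, norm_inv, Real.norm_eq_abs, abs_of_pos (htt0 k)]
    exact inv_mul_cancel₀ (htt0 k).ne'
  have hmemball : ∀ k, x + hs' k ∈ Metric.ball x δ := by
    intro k
    rw [Metric.mem_ball, dist_self_add_left]
    refine lt_of_lt_of_le (hnorm k) ?_
    rw [div_le_iff₀ (by positivity)]
    nlinarith [Nat.cast_nonneg (α := ℝ) k, hδ0]
  have hqn : ∀ k, ‖q k‖ ≤ (K : ℝ) := by
    intro k
    have hd := hlipb.dist_le_mul _ (hmemball k) _ (Metric.mem_ball_self hδ0)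
    rw [dist_eq_norm, dist_eq_norm] at hd
    have e2 : x + hs' k - x = hs' k := by abel
    rw [e2] at hd
    rw [hq, norm_smul, norm_inv, Real.norm_eq_abs, abs_of_pos (htt0 k)]
    rw [inv_mul_le_iff₀ (htt0 k)]
    calc ‖H (x + hs' k) - H x‖ ≤ (K : ℝ) * ‖hs' k‖ := hd
    _ = (K : ℝ) * tt k := rfl
    _ = tt k * (K : ℝ) := by ring
  have hbdd : ∀ k, (u k, q k) ∈ Metric.closedBall (0 : E × E) (max 1 (K : ℝ)) := by
    intro k
    rw [Metric.mem_closedBall, dist_zero_right, Prod.norm_def]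
    apply max_le_max
    · rw [hun k]
    · exact hqn k
  obtain ⟨z, _, φ, hφ, hzlim⟩ := (isCompact_closedBall (0 : E × E) _).tendsto_subseq hbdd
  have hzc : z ∈ tangentConeSeq {p : E × E | p.1 ∈ D ∧ p.2 = H p.1} (x, H x) := by
    refine ⟨tt ∘ φ, fun k => (u (φ k), q (φ k)), fun k => htt0 _,
      httlim.comp hφ.tendsto_atTop, hzlim, ?_⟩
    intro k
    constructor
    · show x + (tt (φ k)) • u (φ k) ∈ D
      rw [hu, smul_inv_smul₀ (htt0 (φ k)).ne']
      exact hballD (hmemball (φ k))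
    · show H x + (tt (φ k)) • q (φ k) = H (x + (tt (φ k)) • u (φ k))
      rw [hu, hq, smul_inv_smul₀ (htt0 (φ k)).ne', smul_inv_smul₀ (htt0 (φ k)).ne']
      abel
  rw [hcone] at hzc
  have hz2 : z.2 = A z.1 := (hgraph z).mp hzc
  have hgt' : ∀ k, ε ≤ ‖q (φ k) - A' (u (φ k))‖ := by
    intro k
    set j := φ k
    have hkey : q j - A' (u j) = (tt j)⁻¹ • (H (x + hs' j) - H x - A' (hs' j)) := by
      rw [hq, hu, smul_sub]
      congr 1
      rw [← A'.map_smul]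
    rw [hkey, norm_smul, norm_inv, Real.norm_eq_abs, abs_of_pos (htt0 j)]
    rw [le_inv_mul_iff₀ (htt0 j)]
    calc tt j * ε = ε * ‖hs' j‖ := by rw [htt]; ring
    _ ≤ ‖H (x + hs' j) - H x - A' (hs' j)‖ := (hgt j).le
  have hlim2 : Tendsto (fun k => ‖q (φ k) - A' (u (φ k))‖) atTop (𝓝 ‖z.2 - A' z.1‖) := by
    have h1 : Tendsto (fun k => u (φ k)) atTop (𝓝 z.1) :=
      (continuous_fst.tendsto z).comp hzlim
    have h2 : Tendsto (fun k => q (φ k)) atTop (𝓝 z.2) :=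
      (continuous_snd.tendsto z).comp hzlim
    exact (h2.sub ((A'.continuous.tendsto z.1).comp h1)).norm
  have hle : ε ≤ ‖z.2 - A' z.1‖ := ge_of_tendsto hlim2 (Filter.Eventually.of_forall hgt')
  rw [hA'app, ← hz2, sub_self, norm_zero] at hle
  linarith

theorem differentiable_iff_tangentCone_subspace
    {n : ℕ} (D : Set (EuclideanSpace ℝ (Fin n))) (hD : IsOpen D)
    (H : EuclideanSpace ℝ (Fin n) → EuclideanSpace ℝ (Fin n))
    (hlip : ∀ x ∈ D, ∃ (K : ℝ≥0) (t : Set (EuclideanSpace ℝ (Fin n))),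
      t ∈ 𝓝 x ∧ LipschitzOnWith K H t)
    (x : EuclideanSpace ℝ (Fin n)) (hx : x ∈ D) :
    (DifferentiableAt ℝ H x ↔
      ∃ L : Submodule ℝ (EuclideanSpace ℝ (Fin n) × EuclideanSpace ℝ (Fin n)),
        Module.finrank ℝ L = n ∧
        tangentConeSeq {p | p.1 ∈ D ∧ p.2 = H p.1} (x, H x) = (L : Set _)) ∧
    (DifferentiableAt ℝ H x →
      tangentConeSeq {p | p.1 ∈ D ∧ p.2 = H p.1} (x, H x)
        = {v | ∃ p, v = (p, fderiv ℝ H x p)}) := by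
  have part2 : DifferentiableAt ℝ H x →
      tangentConeSeq {p | p.1 ∈ D ∧ p.2 = H p.1} (x, H x)
        = {v | ∃ p, v = (p, fderiv ℝ H x p)} := by
    intro hdiff
    have hd := hdiff.hasFDerivAt
    ext v
    constructor
    · intro hv
      exact ⟨v.1, Prod.ext rfl (cone_sub_deriv hd hv)⟩
    · rintro ⟨p, rfl⟩
      exact graph_mem_cone hD hx hd p
  refine ⟨⟨?_, ?_⟩, part2⟩
  · intro hdiff
    refine ⟨LinearMap.graph ((fderiv ℝ H x : _ →ₗ[ℝ] _)), ?_, ?_⟩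
    · rw [graph_eq_range, LinearMap.finrank_range_of_inj, finrank_euclideanSpace_fin]
      intro a b hab
      have := congrArg Prod.fst hab
      simpa using this
    · rw [part2 hdiff]
      ext v
      simp only [Set.mem_setOf_eq, SetLike.mem_coe, LinearMap.mem_graph_iff]
      constructor
      · rintro ⟨p, rfl⟩; rfl
      · intro h
        exact ⟨v.1, Prod.ext rfl (by simpa using h)⟩
  · rintro ⟨L, hfin, hcone⟩
    obtain ⟨K, s, hs, hlipK⟩ := hlip x hx
    exact converse_aux hD hx hs hlipK L
      (by rw [hfin, finrank_euclideanSpace_fin]) hcone
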